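/- The function ψ₁(x) = (3/2)(1 − 5 tanh²(x)) sech(x) satisfies −ψ₁'' − 12 sech²(x) ψ₁ = −ψ₁ on ℝ. -/

import Mathlib

/-- `ψ₁(x) = (3/2)(1 − 5 tanh²(x)) sech(x)` satisfies
`−ψ₁'' − 12 sech²(x) ψ₁ = −ψ₁` on `ℝ`. -/
theorem stmt10 (ψ : ℝ → ℝ)
    (hψ : ∀ x, ψ x = (3 / 2) * (1 - 5 * Real.tanh x ^ 2) * (1 / Real.cosh x)) :
    ∀ x, -deriv (deriv ψ) x - 12 * (1 / Real.cosh x) ^ 2 * ψ x = -ψ x := by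
  have hc : ∀ x : ℝ, Real.cosh x ≠ 0 := fun x => (Real.cosh_pos x).ne'
  have hψeq : ψ = fun x => (3 / 2) * (1 - 5 * (Real.sinh x / Real.cosh x) ^ 2)
      * (1 / Real.cosh x) := by
    funext x; rw [hψ x, Real.tanh_eq_sinh_div_cosh]
  set F : ℝ → ℝ := fun x => (3 / 2) * (-Real.sinh x / Real.cosh x ^ 2
      - 10 * Real.sinh x / Real.cosh x ^ 4 + 5 * Real.sinh x ^ 3 / Real.cosh x ^ 4) with hF
  have h1 : ∀ x, HasDerivAt ψ (F x) x := by
    intro x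
    rw [hψeq]
    have h := ((hasDerivAt_const x ((3:ℝ)/2)).mul
      ((hasDerivAt_const x (1:ℝ)).sub ((hasDerivAt_const x (5:ℝ)).mul
        (((Real.hasDerivAt_sinh x).div (Real.hasDerivAt_cosh x) (hc x)).pow 2)))).mul
      ((hasDerivAt_const x (1:ℝ)).div (Real.hasDerivAt_cosh x) (hc x))
    refine h.congr_deriv ?_
    have h2 : Real.cosh x ^ 2 - Real.sinh x ^ 2 = 1 := Real.cosh_sq_sub_sinh_sq x
    simp only [hF, Pi.pow_apply, Pi.div_apply, Pi.mul_apply, Pi.sub_apply]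
    field_simp
    linear_combination (-30 * Real.sinh x) * h2 + (30 * Real.sinh x ^ 3 - 30 * Real.cosh x ^ 2 * Real.sinh x) * mul_inv_cancel₀ (hc x)
  have hd1 : deriv ψ = F := funext fun x => (h1 x).deriv
  intro x
  have hc2 : Real.cosh x ^ 2 ≠ 0 := pow_ne_zero _ (hc x)
  have hc4 : Real.cosh x ^ 4 ≠ 0 := pow_ne_zero _ (hc x)
  have ha := ((Real.hasDerivAt_sinh x).neg).div ((Real.hasDerivAt_cosh x).pow 2) hc2
  have hb := ((Real.hasDerivAt_sinh x).const_mul (10:ℝ)).div ((Real.hasDerivAt_cosh x).pow 4) hc4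
  have hcc := (((Real.hasDerivAt_sinh x).pow 3).const_mul (5:ℝ)).div ((Real.hasDerivAt_cosh x).pow 4) hc4
  have h2 := ((ha.sub hb).add hcc).const_mul ((3:ℝ)/2)
  have hd2 : deriv (deriv ψ) x = (3/2) * ((-Real.cosh x * Real.cosh x^2 + Real.sinh x * (2 * Real.cosh x * Real.sinh x)) / Real.cosh x^4 - (10*Real.cosh x*Real.cosh x^4 - 10*Real.sinh x*(4*Real.cosh x^3*Real.sinh x))/Real.cosh x^8 + (15*Real.sinh x^2*Real.cosh x * Real.cosh x^4 - 5*Real.sinh x^3*(4*Real.cosh x^3*Real.sinh x))/Real.cosh x^8) := by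
    rw [hd1, hF, (show HasDerivAt (fun x => (3 / 2) * (-Real.sinh x / Real.cosh x ^ 2 - 10 * Real.sinh x / Real.cosh x ^ 4 + 5 * Real.sinh x ^ 3 / Real.cosh x ^ 4)) _ x from h2).deriv]; simp only [Pi.pow_apply, Pi.neg_apply]; push_cast; ring
  rw [hd2, hψ x, Real.tanh_eq_sinh_div_cosh]
  have hid : Real.cosh x ^ 2 - Real.sinh x ^ 2 = 1 := Real.cosh_sq_sub_sinh_sq x
  field_simp
  linear_combination (2 * (Real.cosh x ^ 2 - 10 * Real.sinh x ^ 2)) * hid
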